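/- Let F : ℝ^n → ℝ^n be differentiable with component functions F_i, and suppose a_ij := sup_{x ∈ ℝ^n} |∂F_i/∂x_j (x)| is finite for all i, j. Let L ≥ 1, let D = [d_ij] be a delay matrix with entries in {0,…,L}, and let F_D : ℝ^{n(L+1)} → ℝ^{n(L+1)} be the delayed version of F. Then for all indices (i,ℓ) and (j,m), sup_{z ∈ ℝ^{n(L+1)}} |∂(F_D)_{(i,ℓ)}/∂z_{(j,m)} (z)| = (A_D)_{(i,ℓ),(j,m)}, where A = [a_ij] and A_D is the delayed matrix of A. That is, the Lipschitz-linearization of the delayed map equals the delayed version of the Lipschitz-linearization: Λ ∘ τ_{L,D} = τ_{L,D} ∘ Λ. -/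

import Mathlib

open Matrix BigOperators

def delayedMapR {n L : ℕ} (F : (Fin n → ℝ) → Fin n → ℝ)
    (D : Fin n → Fin n → Fin (L + 1)) :
    ((Fin n × Fin (L + 1)) → ℝ) → (Fin n × Fin (L + 1)) → ℝ :=
  fun z p =>
    if h : (p.2 : ℕ) = 0 then F (fun j => z (j, D p.1 j)) p.1
    else z (p.1, ⟨(p.2 : ℕ) - 1, by have := p.2.isLt; omega⟩)

def delayedMatrix {n L : ℕ} (A : Matrix (Fin n) (Fin n) ℝ)
    (D : Fin n → Fin n → Fin (L + 1)) :
    Matrix (Fin n × Fin (L + 1)) (Fin n × Fin (L + 1)) ℝ :=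
  fun p q =>
    if (p.2 : ℕ) = 0 then (if D p.1 q.1 = q.2 then A p.1 q.1 else 0)
    else if p.1 = q.1 ∧ (q.2 : ℕ) + 1 = (p.2 : ℕ) then 1 else 0

theorem stmt14 {n L : ℕ} (hL : 1 ≤ L)
    (F : (Fin n → ℝ) → Fin n → ℝ) (hF : Differentiable ℝ F)
    (A : Matrix (Fin n) (Fin n) ℝ)
    (hbdd : ∀ i j, BddAbove (Set.range fun x => |fderiv ℝ F x (Pi.single j 1) i|))
    (hA : ∀ i j, A i j = ⨆ x, |fderiv ℝ F x (Pi.single j 1) i|)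
    (D : Fin n → Fin n → Fin (L + 1)) :
    ∀ p q : Fin n × Fin (L + 1),
      (⨆ z : (Fin n × Fin (L + 1)) → ℝ,
          |fderiv ℝ (delayedMapR F D) z (Pi.single q 1) p|) =
        delayedMatrix A D p q := by
  classical
  set π : Fin n → (((Fin n × Fin (L + 1)) → ℝ) →L[ℝ] (Fin n → ℝ)) :=
    fun i => ContinuousLinearMap.pi (fun j => ContinuousLinearMap.proj (j, D i j)) with hπ
  set B : ((Fin n × Fin (L + 1)) → ℝ) →
      (((Fin n × Fin (L + 1)) → ℝ) →L[ℝ] ((Fin n × Fin (L + 1)) → ℝ)) :=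
    fun z => ContinuousLinearMap.pi (fun r : Fin n × Fin (L + 1) =>
      if h : (r.2 : ℕ) = 0 then
        (ContinuousLinearMap.proj r.1).comp ((fderiv ℝ F (π r.1 z)).comp (π r.1))
      else ContinuousLinearMap.proj (r.1, ⟨(r.2 : ℕ) - 1, by have := r.2.isLt; omega⟩)) with hB
  have hder : ∀ z, HasFDerivAt (delayedMapR F D) (B z) z := by
    intro z
    rw [hB]
    have : delayedMapR F D = fun z (r : Fin n × Fin (L + 1)) => delayedMapR F D z r := rfl
    rw [this]
    apply hasFDerivAt_pi.2
    intro r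
    by_cases h : (r.2 : ℕ) = 0
    · simp only [h, dif_pos, delayedMapR]
      have h1 : HasFDerivAt F (fderiv ℝ F (π r.1 z)) (π r.1 z) := (hF _).hasFDerivAt
      have h2 : HasFDerivAt (π r.1) (π r.1) z := (π r.1).hasFDerivAt
      have h3 := h1.comp z h2
      exact (ContinuousLinearMap.proj (R := ℝ) (φ := fun _ : Fin n => ℝ) r.1).hasFDerivAt.comp z h3
    · simp only [h, dif_neg, delayedMapR]
      exact hasFDerivAt_apply _ z
  intro p q
  by_cases hp : (p.2 : ℕ) = 0
  · have hval : ∀ z : (Fin n × Fin (L + 1)) → ℝ,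
        fderiv ℝ (delayedMapR F D) z (Pi.single q 1) p
          = fderiv ℝ F (π p.1 z) (π p.1 (Pi.single q 1)) p.1 := by
      intro z
      rw [(hder z).fderiv, hB]
      simp [hp, ContinuousLinearMap.proj, Fin.val_eq_zero_iff.mp hp]
    by_cases hDq : D p.1 q.1 = q.2
    · have hsingle : π p.1 (Pi.single q 1) = Pi.single q.1 1 := by
        funext j
        simp only [hπ, ContinuousLinearMap.pi_apply, ContinuousLinearMap.proj_apply]
        by_cases hj : j = q.1
        · subst hj
          rw [hDq, Prod.mk.eta]
          simp
        · rw [Pi.single_apply, Pi.single_apply, if_neg hj, if_neg]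
          exact fun hc => hj (congrArg Prod.fst hc)
      have hrange : (Set.range fun z : (Fin n × Fin (L + 1)) → ℝ =>
            |fderiv ℝ (delayedMapR F D) z (Pi.single q 1) p|)
          = Set.range fun x : Fin n → ℝ => |fderiv ℝ F x (Pi.single q.1 1) p.1| := by
        ext y
        constructor
        · rintro ⟨z, rfl⟩
          refine ⟨π p.1 z, ?_⟩
          show |fderiv ℝ F (π p.1 z) (Pi.single q.1 1) p.1|
              = |fderiv ℝ (delayedMapR F D) z (Pi.single q 1) p|
          rw [hval z, hsingle]
        · rintro ⟨x, rfl⟩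
          refine ⟨fun r => x r.1, ?_⟩
          show |fderiv ℝ (delayedMapR F D) (fun r => x r.1) (Pi.single q 1) p|
              = |fderiv ℝ F x (Pi.single q.1 1) p.1|
          have hx : π p.1 (fun r => x r.1) = x := rfl
          rw [hval, hx, hsingle]
      rw [show delayedMatrix A D p q = A p.1 q.1 by simp [delayedMatrix, hp, hDq]]
      rw [hA p.1 q.1, iSup, iSup, hrange]
    · have hzero : π p.1 (Pi.single q 1) = 0 := by
        funext j
        simp only [hπ, ContinuousLinearMap.pi_apply, ContinuousLinearMap.proj_apply]
        rw [Pi.single_apply, if_neg, Pi.zero_apply]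
        intro hc
        obtain ⟨h1, h2⟩ := Prod.mk.injEq .. ▸ hc
        exact hDq (h1 ▸ h2)
      have hv : ∀ z : (Fin n × Fin (L + 1)) → ℝ,
          |fderiv ℝ (delayedMapR F D) z (Pi.single q 1) p| = 0 := by
        intro z
        rw [hval, hzero]
        simp
      simp only [hv]
      rw [ciSup_const]
      simp [delayedMatrix, hp, hDq]
  · have hval : ∀ z : (Fin n × Fin (L + 1)) → ℝ,
        fderiv ℝ (delayedMapR F D) z (Pi.single q 1) p
          = (Pi.single q 1 : (Fin n × Fin (L + 1)) → ℝ)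
              (p.1, ⟨(p.2 : ℕ) - 1, by have := p.2.isLt; omega⟩) := by
      intro z
      rw [(hder z).fderiv, hB]
      simp [hp, ContinuousLinearMap.proj, mt Fin.val_eq_zero_iff.mpr hp]
    simp only [hval]
    rw [ciSup_const]
    simp only [delayedMatrix, if_neg hp, Pi.single_apply]
    by_cases hc : p.1 = q.1 ∧ (q.2 : ℕ) + 1 = (p.2 : ℕ)
    · rw [if_pos hc, if_pos]
      · simp
      · obtain ⟨h1, h2⟩ := hc
        refine Prod.ext h1 (Fin.ext ?_)
        simp
        omega
    · rw [if_neg hc, if_neg]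
      · simp
      · intro hc2
        apply hc
        obtain ⟨h1, h2⟩ := Prod.mk.injEq .. ▸ hc2
        refine ⟨h1, ?_⟩
        have := congrArg Fin.val h2
        simp at this
        omega
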